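/- Let G be a finite 2-group generated by two involutions g₁, g₂, and let V be a finite-dimensional F₂[G]-module that is cyclic, generated by a nonzero vector x ∈ V with g₂·x = x. Define w₀ = x and, for j ≥ 0, w_{j+1} = (g₁ − 1)·w_j if j is even and w_{j+1} = (g₂ − 1)·w_j if j is odd. Let r ≥ 1 be minimal with w_r = 0 (such r exists since the augmentation ideal of F₂[G] is nilpotent). Then w₀, w₁, …, w_{r−1} form an F₂-basis of V; in particular dim_{F₂} V = r. -/

import Mathlib

/-- Let `G` be a finite 2-group generated by two involutions `g₁, g₂`
and let `V` be a finite-dimensional `F₂[G]`-module, cyclic, generated by a nonzero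
vector `x` with `g₂ · x = x`.  Define `w₀ = x` and `w_{j+1} = (g₁ - 1)·w_j` for even `j`,
`w_{j+1} = (g₂ - 1)·w_j` for odd `j`.  If `r ≥ 1` is minimal with `w_r = 0`, then
`w₀, …, w_{r-1}` form an `F₂`-basis of `V`; in particular `dim_{F₂} V = r`. -/
theorem cyclic_module_basis (G : Type) [Group G] [Finite G] (hG : IsPGroup 2 G)
    (g₁ g₂ : G)
    (hg₁ : g₁ * g₁ = 1) (hg₁' : g₁ ≠ 1)
    (hg₂ : g₂ * g₂ = 1) (hg₂' : g₂ ≠ 1)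
    (hgen : Subgroup.closure {g₁, g₂} = ⊤)
    (V : Type) [AddCommGroup V] [Module (ZMod 2) V] [FiniteDimensional (ZMod 2) V]
    (ρ : Representation (ZMod 2) G V)
    (x : V) (hx : x ≠ 0)
    (hfix : ρ g₂ x = x)
    (hcyc : Submodule.span (ZMod 2) (Set.range fun g : G => ρ g x) = ⊤)
    (w : ℕ → V) (hw0 : w 0 = x)
    (hw : ∀ j, w (j + 1) = if Even j then ρ g₁ (w j) - w j else ρ g₂ (w j) - w j)
    (r : ℕ) (hr1 : 1 ≤ r) (hr : w r = 0) (hrmin : ∀ i < r, w i ≠ 0) :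
    (∃ b : Module.Basis (Fin r) (ZMod 2) V, ∀ i : Fin r, b i = w i) ∧
      Module.finrank (ZMod 2) V = r := by
  -- characteristic two facts
  have h2 : ∀ v : V, v + v = 0 := by
    intro v
    rw [← two_smul (ZMod 2) v, show (2 : ZMod 2) = 0 from rfl, zero_smul]
  have hneg : ∀ v : V, -v = v := fun v => neg_eq_of_add_eq_zero_left (h2 v)
  -- involutions act as involutions
  have hρ1 : ∀ v : V, ρ g₁ (ρ g₁ v) = v := by
    intro v
    rw [← Module.End.mul_apply, ← map_mul, hg₁, map_one, Module.End.one_apply]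
  have hρ2 : ∀ v : V, ρ g₂ (ρ g₂ v) = v := by
    intro v
    rw [← Module.End.mul_apply, ← map_mul, hg₂, map_one, Module.End.one_apply]
  -- fixed-vector lemmas
  have hfix2 : ∀ j : ℕ, Even j → ρ g₂ (w j) = w j := by
    intro j hj
    rcases j with _ | j'
    · rw [hw0, hfix]
    · have hj' : ¬ Even j' := by
        simpa [Nat.even_add_one] using hj
      have hwj : w (j' + 1) = ρ g₂ (w j') - w j' := by rw [hw j', if_neg hj']
      rw [hwj, map_sub, hρ2, ← neg_sub (ρ g₂ (w j')) (w j'), hneg]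
  have hfix1 : ∀ j : ℕ, Odd j → ρ g₁ (w j) = w j := by
    intro j hj
    rcases j with _ | j'
    · simp at hj
    · have hj' : Even j' := Nat.not_odd_iff_even.mp (Nat.odd_add_one.mp hj)
      have hwj : w (j' + 1) = ρ g₁ (w j') - w j' := by rw [hw j', if_pos hj']
      rw [hwj, map_sub, hρ1, ← neg_sub (ρ g₁ (w j')) (w j'), hneg]
  -- the transition operator
  set T : V →ₗ[ZMod 2] V := ρ g₁ + ρ g₂ with hTdef
  have hT : ∀ j : ℕ, T (w j) = w (j + 1) := by
    intro j
    by_cases hj : Even j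
    · rw [hw j, if_pos hj]
      show ρ g₁ (w j) + ρ g₂ (w j) = ρ g₁ (w j) - w j
      rw [hfix2 j hj, sub_eq_add_neg, hneg]
    · rw [hw j, if_neg hj]
      show ρ g₁ (w j) + ρ g₂ (w j) = ρ g₂ (w j) - w j
      rw [hfix1 j (Nat.not_even_iff_odd.mp hj), sub_eq_add_neg, hneg, add_comm]
  have hTk : ∀ k j : ℕ, (T ^ k) (w j) = w (j + k) := by
    intro k
    induction k with
    | zero => intro j; simp
    | succ k ih =>
      intro j
      rw [pow_succ, Module.End.mul_apply, hT j, ih (j + 1)]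
      congr 1
      omega
  -- nothing survives past r
  have hzero : ∀ j : ℕ, r ≤ j → w j = 0 := by
    intro j hj
    have h := hTk (j - r) r
    rw [hr, map_zero] at h
    have : r + (j - r) = j := by omega
    rw [this] at h
    exact h.symm
  -- linear independence
  have hind : LinearIndependent (ZMod 2) (fun i : Fin r => w i) := by
    rw [Fintype.linearIndependent_iff]
    intro c hc
    have key : ∀ n : ℕ, ∀ i : Fin r, (i : ℕ) = n → c i = 0 := by
      intro n
      induction n using Nat.strong_induction_on with
      | _ n ih =>
        intro i hi
        have happ := congrArg (⇑(T ^ (r - 1 - (i : ℕ)))) hc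
        rw [map_sum, map_zero] at happ
        have hsingle :
            (∑ j : Fin r, (T ^ (r - 1 - (i : ℕ))) (c j • w (j : ℕ)))
              = (T ^ (r - 1 - (i : ℕ))) (c i • w (i : ℕ)) := by
          apply Finset.sum_eq_single
          · intro j _ hj
            rw [map_smul, hTk]
            rcases lt_or_gt_of_ne (fun h : (j : ℕ) = (i : ℕ) => hj (Fin.ext h)) with h | h
            · rw [ih (j : ℕ) (by omega) j rfl, zero_smul]
            · rw [hzero ((j : ℕ) + (r - 1 - (i : ℕ))) (by omega), smul_zero]
          · intro h
            exact absurd (Finset.mem_univ i) h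
        rw [hsingle, map_smul, hTk] at happ
        have hidx : (i : ℕ) + (r - 1 - (i : ℕ)) = r - 1 := by omega
        rw [hidx] at happ
        rcases smul_eq_zero.mp happ with h | h
        · exact h
        · exact absurd h (hrmin (r - 1) (by omega))
    intro i
    exact key (i : ℕ) i rfl
  -- spanning
  have hspan : Submodule.span (ZMod 2) (Set.range fun i : Fin r => w i) = ⊤ := by
    set W := Submodule.span (ZMod 2) (Set.range fun i : Fin r => w (i : ℕ)) with hWdef
    have hwW : ∀ j : ℕ, w j ∈ W := by
      intro j
      by_cases hj : j < r
      · exact Submodule.subset_span ⟨⟨j, hj⟩, rfl⟩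
      · rw [hzero j (by omega)]
        exact W.zero_mem
    have hg1w : ∀ j : ℕ, ρ g₁ (w j) ∈ W := by
      intro j
      by_cases hj : Even j
      · have h : ρ g₁ (w j) = w (j + 1) + w j := by
          rw [hw j, if_pos hj, sub_add_cancel]
        rw [h]
        exact W.add_mem (hwW _) (hwW _)
      · rw [hfix1 j (Nat.not_even_iff_odd.mp hj)]
        exact hwW j
    have hg2w : ∀ j : ℕ, ρ g₂ (w j) ∈ W := by
      intro j
      by_cases hj : Even j
      · rw [hfix2 j hj]
        exact hwW j
      · have h : ρ g₂ (w j) = w (j + 1) + w j := by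
          rw [hw j, if_neg hj, sub_add_cancel]
        rw [h]
        exact W.add_mem (hwW _) (hwW _)
    have hg1W : ∀ v ∈ W, ρ g₁ v ∈ W := by
      intro v hv
      induction hv using Submodule.span_induction with
      | mem v hvmem =>
        obtain ⟨i, rfl⟩ := hvmem
        exact hg1w i
      | zero => rw [map_zero]; exact W.zero_mem
      | add a b _ _ ha hb => rw [map_add]; exact W.add_mem ha hb
      | smul a v _ hv => rw [map_smul]; exact W.smul_mem a hv
    have hg2W : ∀ v ∈ W, ρ g₂ v ∈ W := by
      intro v hv
      induction hv using Submodule.span_induction with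
      | mem v hvmem =>
        obtain ⟨i, rfl⟩ := hvmem
        exact hg2w i
      | zero => rw [map_zero]; exact W.zero_mem
      | add a b _ _ ha hb => rw [map_add]; exact W.add_mem ha hb
      | smul a v _ hv => rw [map_smul]; exact W.smul_mem a hv
    -- monoid closure equals the whole group
    have hinv1 : g₁⁻¹ = g₁ := inv_eq_of_mul_eq_one_right hg₁
    have hinv2 : g₂⁻¹ = g₂ := inv_eq_of_mul_eq_one_right hg₂
    have hmono : Submonoid.closure ({g₁, g₂} : Set G) = ⊤ := by
      have h := congrArg Subgroup.toSubmonoid hgen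
      rw [Subgroup.closure_toSubmonoid] at h
      have hs : ({g₁, g₂} : Set G) ∪ ({g₁, g₂} : Set G)⁻¹ = {g₁, g₂} := by
        ext a
        simp only [Set.mem_union, Set.mem_insert_iff, Set.mem_singleton_iff, Set.mem_inv]
        constructor
        · rintro ((h | h) | (h | h))
          · exact Or.inl h
          · exact Or.inr h
          · exact Or.inl (by rw [← inv_inv a, h, hinv1])
          · exact Or.inr (by rw [← inv_inv a, h, hinv2])
        · rintro (h | h)
          · exact Or.inl (Or.inl h)
          · exact Or.inl (Or.inr h)
      rw [hs] at h
      rw [h]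
      rfl
    have hgW : ∀ g : G, ∀ v ∈ W, ρ g v ∈ W := by
      intro g
      have hg : g ∈ Submonoid.closure ({g₁, g₂} : Set G) := by
        rw [hmono]; exact Submonoid.mem_top g
      induction hg using Submonoid.closure_induction with
      | mem a ha =>
        rcases ha with h | h
        · subst h; exact hg1W
        · rw [Set.mem_singleton_iff] at h; subst h; exact hg2W
      | one => intro v hv; rw [map_one, Module.End.one_apply]; exact hv
      | mul a b _ _ ha hb =>
        intro v hv
        rw [map_mul, Module.End.mul_apply]
        exact ha _ (hb _ hv)
    have hle : Submodule.span (ZMod 2) (Set.range fun g : G => ρ g x) ≤ W := by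
      apply Submodule.span_le.mpr
      rintro _ ⟨g, rfl⟩
      have hxW : x ∈ W := by rw [← hw0]; exact hwW 0
      exact hgW g x hxW
    rw [hcyc] at hle
    exact le_antisymm le_top hle
  -- conclusion
  let b : Module.Basis (Fin r) (ZMod 2) V := Module.Basis.mk hind (by rw [hspan])
  refine ⟨⟨b, fun i => Module.Basis.mk_apply hind _ i⟩, ?_⟩
  rw [Module.finrank_eq_card_basis b, Fintype.card_fin]
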